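/- Let D ⊆ ℝⁿ be a nonempty (possibly infinite) set of nonzero vectors contained in a linear subspace L ⊆ ℝⁿ. If pspan(D) ≠ L, then there exists a nonzero vector h ∈ L such that ⟨h, d⟩ ≤ 0 for every d ∈ D (i.e., all vectors of D lie in a closed half-space of L). -/

import Mathlib

open scoped RealInnerProductSpace

noncomputable section

/-- The positive span of a set `D`: all finite nonnegative linear combinations
of elements of `D`. -/
def pspan {E : Type*} [AddCommGroup E] [Module ℝ E] (D : Set E) : Set E :=
  {x | ∃ (k : ℕ) (d : Fin k → E) (c : Fin k → ℝ),
    (∀ i, d i ∈ D) ∧ (∀ i, 0 ≤ c i) ∧ x = ∑ i, c i • d i}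

/-- The cosine measure of `D` relative to a subspace `L`:
`min` over unit vectors `u ∈ L` of `sup_{d ∈ D} ⟪u, d⟫ / ‖d‖`. -/
noncomputable def cmRel {E : Type*} [NormedAddCommGroup E] [InnerProductSpace ℝ E]
    (L : Submodule ℝ E) (D : Set E) : ℝ :=
  sInf ((fun u => sSup ((fun d => ⟪u, d⟫ / ‖d‖) '' D)) '' {u : E | u ∈ L ∧ ‖u‖ = 1})

/-- The cosine vector set of `D` relative to a subspace `L`: the set of unit
vectors `u ∈ L` attaining the minimum defining `cmRel L D`. -/
noncomputable def cVRel {E : Type*} [NormedAddCommGroup E] [InnerProductSpace ℝ E]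
    (L : Submodule ℝ E) (D : Set E) : Set E :=
  {u : E | u ∈ L ∧ ‖u‖ = 1 ∧ sSup ((fun d => ⟪u, d⟫ / ‖d‖) '' D) = cmRel L D}

section auxGeneral

variable {E : Type*} [AddCommGroup E] [Module ℝ E] {D : Set E}

lemma zero_mem_pspan (D : Set E) : (0 : E) ∈ pspan D :=
  ⟨0, Fin.elim0, Fin.elim0, fun i => i.elim0, fun i => i.elim0, by simp⟩

lemma subset_pspan (D : Set E) : D ⊆ pspan D := fun d hd =>
  ⟨1, fun _ => d, fun _ => 1, fun _ => hd, fun _ => zero_le_one, by simp⟩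

lemma pspan_add {x y : E} (hx : x ∈ pspan D) (hy : y ∈ pspan D) : x + y ∈ pspan D := by
  obtain ⟨k, d, c, hd, hc, rfl⟩ := hx
  obtain ⟨k', d', c', hd', hc', rfl⟩ := hy
  refine ⟨k + k', Fin.append d d', Fin.append c c', ?_, ?_, ?_⟩
  · intro i
    refine Fin.addCases (fun j => ?_) (fun j => ?_) i
    · simpa [Fin.append_left] using hd j
    · simpa [Fin.append_right] using hd' j
  · intro i
    refine Fin.addCases (fun j => ?_) (fun j => ?_) i
    · simpa [Fin.append_left] using hc j
    · simpa [Fin.append_right] using hc' j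
  · rw [Fin.sum_univ_add]
    simp [Fin.append_left, Fin.append_right]

lemma pspan_smul {t : ℝ} (ht : 0 ≤ t) {x : E} (hx : x ∈ pspan D) : t • x ∈ pspan D := by
  obtain ⟨k, d, c, hd, hc, rfl⟩ := hx
  exact ⟨k, d, fun i => t * c i, hd, fun i => mul_nonneg ht (hc i),
    by rw [Finset.smul_sum]; simp [mul_smul]⟩

lemma pspan_convex : Convex ℝ (pspan D) := fun x hx y hy a b ha hb _ =>
  pspan_add (pspan_smul ha hx) (pspan_smul hb hy)

end auxGeneral

/-- The key finite-dimensional lemma, stated for an abstract finite-dimensional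
real inner product space. -/
lemma key_lemma {V : Type*} [NormedAddCommGroup V] [InnerProductSpace ℝ V]
    [FiniteDimensional ℝ V] {D : Set V} (h : pspan D ≠ Set.univ) :
    ∃ h' : V, h' ≠ 0 ∧ ∀ d ∈ D, ⟪h', d⟫ ≤ 0 := by
  haveI : CompleteSpace V := FiniteDimensional.complete ℝ V
  by_cases hspan : Submodule.span ℝ D = ⊤
  · -- the linear span of `D` is everything; then `pspan D` has nonempty interior
    have hconv : Convex ℝ (pspan D) := pspan_convex
    have hvect : vectorSpan ℝ (pspan D) = ⊤ := by
      rw [eq_top_iff, ← hspan]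
      refine Submodule.span_le.2 fun d hd => Submodule.subset_span ?_
      exact ⟨d, subset_pspan D hd, 0, zero_mem_pspan D, by simp⟩
    have haff : affineSpan ℝ (pspan D) = ⊤ := by
      rw [AffineSubspace.affineSpan_eq_top_iff_vectorSpan_eq_top_of_nonempty ℝ V V
        ⟨0, zero_mem_pspan D⟩]
      exact hvect
    obtain ⟨x₀, hx₀⟩ := (hconv.interior_nonempty_iff_affineSpan_eq_top).2 haff
    -- the closure of `pspan D` is not everything
    have hcl : closure (pspan D) ≠ Set.univ := by
      intro hcl
      apply h
      rw [Set.eq_univ_iff_forall]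
      intro y
      have hw : (2 : ℝ) • y - x₀ ∈ closure (pspan D) := by rw [hcl]; trivial
      have := hconv.combo_interior_closure_mem_interior hx₀ hw
        (by norm_num : (0:ℝ) < 1/2) (by norm_num : (0:ℝ) ≤ 1/2) (by norm_num)
      have hy : y ∈ interior (pspan D) := by
        convert this using 1
        module
      exact interior_subset hy
    obtain ⟨b, hb⟩ : ∃ b : V, b ∉ closure (pspan D) := by
      by_contra hb
      push_neg at hb
      exact hcl (Set.eq_univ_iff_forall.2 hb)
    -- build the closed convex cone and separate
    let C : ConvexCone ℝ V :=
      { carrier := pspan D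
        smul_mem' := fun c hc _ hx => pspan_smul hc.le hx
        add_mem' := fun _ hx _ hy => pspan_add hx hy }
    obtain ⟨y, hy1, hy2⟩ :=
      ProperCone.hyperplane_separation' (ClosedSubmodule.mk (C.toPointedCone (zero_mem_pspan D)).closure
          isClosed_closure : ProperCone ℝ V)
        (x₀ := b) hb
    refine ⟨-y, ?_, ?_⟩
    · intro h0
      rw [neg_eq_zero] at h0
      rw [h0, inner_zero_right] at hy2
      exact lt_irrefl _ hy2
    · intro d hd
      have : 0 ≤ ⟪d, y⟫ :=
        hy1 d (subset_closure (subset_pspan D hd))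
      rw [inner_neg_left, real_inner_comm]
      linarith
  · -- the span is a proper subspace; take a vector in its orthogonal complement
    obtain ⟨h', hh'⟩ : ∃ h' : (Submodule.span ℝ D)ᗮ, h' ≠ 0 := by
      by_contra hb
      push_neg at hb
      have : (Submodule.span ℝ D)ᗮ = ⊥ := by
        rw [Submodule.eq_bot_iff]
        intro x hx
        simpa using congrArg Subtype.val (hb ⟨x, hx⟩)
      exact hspan (Submodule.orthogonal_eq_bot_iff.1 this)
    refine ⟨(h' : V), ?_, ?_⟩
    · intro h0
      exact hh' (Subtype.ext h0)
    · intro d hd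
      have := h'.2 d (Submodule.subset_span hd)
      rw [real_inner_comm] at this
      rw [this]

theorem stmt6 {n : ℕ} (D : Set (EuclideanSpace ℝ (Fin n))) (hne : D.Nonempty)
    (h0 : (0 : EuclideanSpace ℝ (Fin n)) ∉ D)
    (L : Submodule ℝ (EuclideanSpace ℝ (Fin n)))
    (hDL : D ⊆ (L : Set (EuclideanSpace ℝ (Fin n))))
    (h : pspan D ≠ (L : Set (EuclideanSpace ℝ (Fin n)))) :
    ∃ h' ∈ L, h' ≠ 0 ∧ ∀ d ∈ D, ⟪h', d⟫ ≤ 0 := by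
  classical
  -- work inside the subspace `L`
  have hps : pspan {x : L | (x : EuclideanSpace ℝ (Fin n)) ∈ D} ≠ Set.univ := by
    intro heq
    apply h
    apply Set.Subset.antisymm
    · rintro x ⟨k, d, c, hd, hc, rfl⟩
      exact Submodule.sum_mem L fun i _ => Submodule.smul_mem L _ (hDL (hd i))
    · intro x hxL
      have hx' : (⟨x, hxL⟩ : L) ∈ pspan {x : L | (x : EuclideanSpace ℝ (Fin n)) ∈ D} := by
        rw [heq]; trivial
      obtain ⟨k, d, c, hd, hc, hx⟩ := hx'
      refine ⟨k, fun i => (d i : EuclideanSpace ℝ (Fin n)), c, fun i => hd i, hc, ?_⟩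
      have := congrArg (Subtype.val : L → EuclideanSpace ℝ (Fin n)) hx
      simpa using this
  obtain ⟨h', hh0, hh⟩ := key_lemma hps
  refine ⟨(h' : EuclideanSpace ℝ (Fin n)), h'.2, ?_, ?_⟩
  · intro h0'
    exact hh0 (Subtype.ext h0')
  · intro d hd
    have := hh ⟨d, hDL hd⟩ hd
    rwa [Submodule.coe_inner] at this
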